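/- Let D be a division ring, K a field in the center of D, and A ⊂ M_n(D) × M_n(D) a maximal K-subalgebra such that both projections restricted to A are surjective. Then there exists a K-algebra automorphism α of M_n(D) such that A = {(X, α(X)) : X ∈ M_n(D)}. -/

import Mathlib

/-- A maximal `K`-subalgebra of `Mₙ(D) × Mₙ(D)` projecting surjectively onto both factors
is the twisted diagonal `{(X, α X)}` for some `K`-algebra automorphism `α` of `Mₙ(D)`. -/
theorem stmt10 {K D : Type*} [Field K] [DivisionRing D] [Algebra K D] (n : ℕ)
    (A : Subalgebra K (Matrix (Fin n) (Fin n) D × Matrix (Fin n) (Fin n) D))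
    (hmax : IsCoatom A)
    (h1 : Function.Surjective fun a : A => (a : Matrix (Fin n) (Fin n) D × Matrix (Fin n) (Fin n) D).1)
    (h2 : Function.Surjective fun a : A => (a : Matrix (Fin n) (Fin n) D × Matrix (Fin n) (Fin n) D).2) :
    ∃ α : Matrix (Fin n) (Fin n) D ≃ₐ[K] Matrix (Fin n) (Fin n) D,
      ∀ x, x ∈ A ↔ ∃ X : Matrix (Fin n) (Fin n) D, x = (X, α X) := by
  set M := Matrix (Fin n) (Fin n) D with hM
  rcases Nat.eq_zero_or_pos n with hn | hn
  · subst hn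
    exfalso
    apply hmax.1
    ext x
    simp only [Algebra.mem_top, iff_true]
    have : x = 0 := Subsingleton.elim x 0
    rw [this]; exact A.zero_mem
  have : Nonempty (Fin n) := ⟨⟨0, hn⟩⟩
  -- the right kernel is trivial
  have key2 : ∀ y : M, ((0 : M), y) ∈ A → y = 0 := by
    intro y hy
    by_contra hy0
    have hadd : ∀ {a b : M}, a ∈ {y : M | ((0:M), y) ∈ A} → b ∈ {y : M | ((0:M), y) ∈ A} →
        a + b ∈ {y : M | ((0:M), y) ∈ A} := by
      intro a b ha hb
      have := A.add_mem ha hb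
      simpa using this
    have hneg : ∀ {a : M}, a ∈ {y : M | ((0:M), y) ∈ A} → -a ∈ {y : M | ((0:M), y) ∈ A} := by
      intro a ha
      have := A.neg_mem ha
      simpa using this
    have hml : ∀ {x y : M}, y ∈ {y : M | ((0:M), y) ∈ A} → x * y ∈ {y : M | ((0:M), y) ∈ A} := by
      intro x y hyA
      obtain ⟨a, ha⟩ := h2 x
      replace ha : (a : M × M).2 = x := ha
      have h := A.mul_mem a.2 hyA
      have heq : (a : M × M) * (((0:M), y) : M × M) = ((0:M), x * y) :=
        Prod.ext (by simp) (by simp [ha])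
      rw [heq] at h
      exact h
    have hmr : ∀ {x y : M}, x ∈ {y : M | ((0:M), y) ∈ A} → x * y ∈ {y : M | ((0:M), y) ∈ A} := by
      intro x y hxA
      obtain ⟨a, ha⟩ := h2 y
      replace ha : (a : M × M).2 = y := ha
      have h := A.mul_mem hxA a.2
      have heq : (((0:M), x) : M × M) * (a : M × M) = ((0:M), x * y) :=
        Prod.ext (by simp) (by simp [ha])
      rw [heq] at h
      exact h
    set I : TwoSidedIdeal M := TwoSidedIdeal.mk' {y : M | ((0:M), y) ∈ A}
      (by exact A.zero_mem) hadd hneg hml hmr with hI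
    have hone : (1 : M) ∈ I :=
      IsSimpleRing.one_mem_of_ne_zero_mem I hy0 (by rw [hI, TwoSidedIdeal.mem_mk']; exact hy)
    rw [hI, TwoSidedIdeal.mem_mk'] at hone
    -- now (0, 1) ∈ A, so A = ⊤
    apply hmax.1
    ext x
    simp only [Algebra.mem_top, iff_true]
    obtain ⟨a, ha⟩ := h1 x.1
    replace ha : (a : M × M).1 = x.1 := ha
    obtain ⟨b, hb⟩ := h2 (x.2 - (a : M × M).2)
    replace hb : (b : M × M).2 = x.2 - (a : M × M).2 := hb
    have h01 : ((0:M), x.2 - (a : M × M).2) ∈ A := by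
      have h := A.mul_mem b.2 hone
      have heq : (b : M × M) * (((0:M), (1:M)) : M × M) = ((0:M), x.2 - (a : M × M).2) :=
        Prod.ext (by simp) (by simp [hb])
      rw [heq] at h
      exact h
    have h := A.add_mem a.2 h01
    have heq : (a : M × M) + ((0:M), x.2 - (a : M × M).2) = x :=
      Prod.ext (by simp [ha]) (by simp)
    rw [heq] at h
    exact h
  -- the left kernel is trivial
  have key1 : ∀ x : M, (x, (0 : M)) ∈ A → x = 0 := by
    intro y hy
    by_contra hy0
    have hadd : ∀ {a b : M}, a ∈ {y : M | (y, (0:M)) ∈ A} → b ∈ {y : M | (y, (0:M)) ∈ A} →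
        a + b ∈ {y : M | (y, (0:M)) ∈ A} := by
      intro a b ha hb
      have := A.add_mem ha hb
      simpa using this
    have hneg : ∀ {a : M}, a ∈ {y : M | (y, (0:M)) ∈ A} → -a ∈ {y : M | (y, (0:M)) ∈ A} := by
      intro a ha
      have := A.neg_mem ha
      simpa using this
    have hml : ∀ {x y : M}, y ∈ {y : M | (y, (0:M)) ∈ A} → x * y ∈ {y : M | (y, (0:M)) ∈ A} := by
      intro x y hyA
      obtain ⟨a, ha⟩ := h1 x
      replace ha : (a : M × M).1 = x := ha
      have h := A.mul_mem a.2 hyA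
      have heq : (a : M × M) * ((y, (0:M)) : M × M) = (x * y, (0:M)) :=
        Prod.ext (by simp [ha]) (by simp)
      rw [heq] at h
      exact h
    have hmr : ∀ {x y : M}, x ∈ {y : M | (y, (0:M)) ∈ A} → x * y ∈ {y : M | (y, (0:M)) ∈ A} := by
      intro x y hxA
      obtain ⟨a, ha⟩ := h1 y
      replace ha : (a : M × M).1 = y := ha
      have h := A.mul_mem hxA a.2
      have heq : ((x, (0:M)) : M × M) * (a : M × M) = (x * y, (0:M)) :=
        Prod.ext (by simp [ha]) (by simp)
      rw [heq] at h
      exact h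
    set I : TwoSidedIdeal M := TwoSidedIdeal.mk' {y : M | (y, (0:M)) ∈ A}
      (by exact A.zero_mem) hadd hneg hml hmr with hI
    have hone : (1 : M) ∈ I :=
      IsSimpleRing.one_mem_of_ne_zero_mem I hy0 (by rw [hI, TwoSidedIdeal.mem_mk']; exact hy)
    rw [hI, TwoSidedIdeal.mem_mk'] at hone
    apply hmax.1
    ext x
    simp only [Algebra.mem_top, iff_true]
    obtain ⟨a, ha⟩ := h2 x.2
    replace ha : (a : M × M).2 = x.2 := ha
    obtain ⟨b, hb⟩ := h1 (x.1 - (a : M × M).1)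
    replace hb : (b : M × M).1 = x.1 - (a : M × M).1 := hb
    have h01 : (x.1 - (a : M × M).1, (0:M)) ∈ A := by
      have h := A.mul_mem b.2 hone
      have heq : (b : M × M) * (((1:M), (0:M)) : M × M) = (x.1 - (a : M × M).1, (0:M)) :=
        Prod.ext (by simp [hb]) (by simp)
      rw [heq] at h
      exact h
    have h := A.add_mem a.2 h01
    have heq : (a : M × M) + (x.1 - (a : M × M).1, (0:M)) = x :=
      Prod.ext (by simp) (by simp [ha])
    rw [heq] at h
    exact h
  -- both projections are bijective
  set f : A →ₐ[K] M := (AlgHom.fst K M M).comp A.val with hf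
  set g : A →ₐ[K] M := (AlgHom.snd K M M).comp A.val with hg
  have hfinj : Function.Injective f := by
    rw [injective_iff_map_eq_zero]
    intro a ha
    have h1a : (a : M × M).1 = 0 := ha
    have hmem : ((0 : M), (a : M × M).2) ∈ A := by rw [← h1a]; exact a.2
    have h2a := key2 _ hmem
    exact Subtype.ext (Prod.ext h1a h2a)
  have hginj : Function.Injective g := by
    rw [injective_iff_map_eq_zero]
    intro a ha
    have h2a : (a : M × M).2 = 0 := ha
    have hmem : ((a : M × M).1, (0 : M)) ∈ A := by rw [← h2a]; exact a.2
    have h1a := key1 _ hmem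
    exact Subtype.ext (Prod.ext h1a h2a)
  set e₁ : A ≃ₐ[K] M := AlgEquiv.ofBijective f ⟨hfinj, h1⟩ with he₁
  set e₂ : A ≃ₐ[K] M := AlgEquiv.ofBijective g ⟨hginj, h2⟩ with he₂
  refine ⟨e₁.symm.trans e₂, fun x => ⟨fun hx => ?_, ?_⟩⟩
  · refine ⟨x.1, ?_⟩
    have hsym : e₁.symm x.1 = ⟨x, hx⟩ := by
      apply e₁.injective
      rw [AlgEquiv.apply_symm_apply]
      rfl
    have hx2 : (e₁.symm.trans e₂) x.1 = x.2 := by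
      rw [AlgEquiv.trans_apply, hsym]
      rfl
    rw [hx2]
  · rintro ⟨X, rfl⟩
    set a := e₁.symm X with hA
    have h1a : (a : M × M).1 = X := by
      have : e₁ a = X := by rw [hA, AlgEquiv.apply_symm_apply]
      exact this
    have h2a : (a : M × M).2 = (e₁.symm.trans e₂) X := by
      rw [AlgEquiv.trans_apply, ← hA]
      rfl
    have : (X, (e₁.symm.trans e₂) X) = (a : M × M) := Prod.ext h1a.symm h2a.symm
    rw [this]
    exact a.2
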